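/- arXiv:1302.6599 — 4 statements merged into one kernel-verified Lean document; each statement's English description precedes it below -/
import Mathlib

section
/- Let 1 ≤ p ≤ N, let β₁,…,β_N ∈ ℝ^d satisfy β₁+⋯+β_p = 0, let r₁,…,r_N ∈ [0,1] with r₁ ≤ r₂ ≤ ⋯ ≤ r_p, and set r = Σ_{k=1}^N r_kβ_k. Then for every h ∈ {1,…,p}: (a) r_h − r_j ∈ [0,1] for all j < h and r_j − r_h ∈ [0,1] for all h < j ≤ p; (b) r = Σ_{j<h} (r_h−r_j)(−β_j) + Σ_{h<j≤p} (r_j−r_h)β_j + Σ_{j>p} r_jβ_j; consequently r belongs to the zonotope Z(Ψ_h) of the system Ψ_h consisting of the N−1 vectors −β₁,…,−β_{h−1}, β_{h+1},…,β_p, β_{p+1},…,β_N. -/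
open Finset

/-- The zonotope `Z(δ₁,…,δ_m) = {Σ_j t_j δ_j : 0 ≤ t_j ≤ 1}` of a finite list of vectors. -/
def Zonotope {d m : ℕ} (δ : Fin m → EuclideanSpace ℝ (Fin d)) :
    Set (EuclideanSpace ℝ (Fin d)) :=
  {v | ∃ t : Fin m → ℝ, (∀ j, t j ∈ Set.Icc (0 : ℝ) 1) ∧ v = ∑ j, t j • δ j}

/-- With `0`-based indices: if `β₀ + ⋯ + β_{p−1} = 0`, all `r_k ∈ [0,1]`, and
`r₀ ≤ ⋯ ≤ r_{p−1}`, then for every `h < p`, (a) `r_h − r_j ∈ [0,1]` for `j < h` and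
`r_j − r_h ∈ [0,1]` for `h < j < p`; (b) `r = Σ_{j<h} (r_h−r_j)(−β_j) +
Σ_{h<j<p} (r_j−r_h)β_j + Σ_{j≥p} r_jβ_j`; and consequently `r ∈ Z(Ψ_h)`, where `Ψ_h` is the
system of `n` vectors `−β₀,…,−β_{h−1}, β_{h+1},…,β_{p−1}, β_p,…,β_n` indexed by
`Fin n` via `h.succAbove`. -/
theorem statement1 {d n : ℕ} (p : ℕ) (hp1 : 1 ≤ p) (hpN : p ≤ n + 1)
    (β : Fin (n + 1) → EuclideanSpace ℝ (Fin d)) (r : Fin (n + 1) → ℝ)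
    (hr : ∀ k, r k ∈ Set.Icc (0 : ℝ) 1)
    (hmono : ∀ j k : Fin (n + 1), (j : ℕ) ≤ (k : ℕ) → (k : ℕ) < p → r j ≤ r k)
    (hsum : ∑ k ∈ univ.filter (fun k : Fin (n + 1) => (k : ℕ) < p), β k = 0) :
    ∀ h : Fin (n + 1), (h : ℕ) < p →
      (∀ j : Fin (n + 1), (j : ℕ) < (h : ℕ) → r h - r j ∈ Set.Icc (0 : ℝ) 1) ∧
      (∀ j : Fin (n + 1), (h : ℕ) < (j : ℕ) → (j : ℕ) < p →
        r j - r h ∈ Set.Icc (0 : ℝ) 1) ∧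
      ((∑ k, r k • β k) =
        (∑ j ∈ univ.filter (fun j : Fin (n + 1) => (j : ℕ) < (h : ℕ)),
            (r h - r j) • (-β j)) +
        (∑ j ∈ univ.filter (fun j : Fin (n + 1) => (h : ℕ) < (j : ℕ) ∧ (j : ℕ) < p),
            (r j - r h) • β j) +
        (∑ j ∈ univ.filter (fun j : Fin (n + 1) => p ≤ (j : ℕ)), r j • β j)) ∧
      (∑ k, r k • β k) ∈ Zonotope (fun i : Fin n =>
        if (h.succAbove i : ℕ) < (h : ℕ) then -β (h.succAbove i) else β (h.succAbove i)) := by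
  intro h hh
  have ha1 : ∀ j : Fin (n + 1), (j : ℕ) < (h : ℕ) → r h - r j ∈ Set.Icc (0 : ℝ) 1 := by
    intro j hj
    have h1 := hmono j h (le_of_lt hj) hh
    have h2 := hr j; have h3 := hr h
    constructor <;> [linarith [h1]; linarith [h2.1, h3.2]]
  have ha2 : ∀ j : Fin (n + 1), (h : ℕ) < (j : ℕ) → (j : ℕ) < p →
      r j - r h ∈ Set.Icc (0 : ℝ) 1 := by
    intro j hj hjp
    have h1 := hmono h j (le_of_lt hj) hjp
    have h2 := hr j; have h3 := hr h
    constructor <;> [linarith [h1]; linarith [h2.2, h3.1]]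
  set g : Fin (n + 1) → EuclideanSpace ℝ (Fin d) :=
    fun j => if (j : ℕ) < p then (r j - r h) • β j else r j • β j with hg
  have hgh : g h = 0 := by simp [hg, hh]
  have key : ∑ j, g j = ∑ k, r k • β k := by
    have h1 : ∀ j : Fin (n + 1),
        g j = r j • β j - (if (j : ℕ) < p then r h • β j else 0) := by
      intro j
      simp only [hg]
      split <;> simp [sub_smul]
    rw [Finset.sum_congr rfl fun j _ => h1 j, Finset.sum_sub_distrib]
    rw [← Finset.sum_filter, ← Finset.smul_sum, hsum, smul_zero, sub_zero]
  have hb : (∑ k, r k • β k) =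
        (∑ j ∈ univ.filter (fun j : Fin (n + 1) => (j : ℕ) < (h : ℕ)),
            (r h - r j) • (-β j)) +
        (∑ j ∈ univ.filter (fun j : Fin (n + 1) => (h : ℕ) < (j : ℕ) ∧ (j : ℕ) < p),
            (r j - r h) • β j) +
        (∑ j ∈ univ.filter (fun j : Fin (n + 1) => p ≤ (j : ℕ)), r j • β j) := by
    rw [← key]
    rw [Finset.sum_filter, Finset.sum_filter, Finset.sum_filter,
      ← Finset.sum_add_distrib, ← Finset.sum_add_distrib]
    refine Finset.sum_congr rfl fun j _ => ?_
    simp only [hg]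
    split_ifs with h1 h2 h3 h4 h5 h6 h7 <;>
      first
      | (exfalso; omega)
      | module
      | (have hje : j = h := Fin.ext (by omega); simp [hje])
  refine ⟨ha1, ha2, hb, ?_⟩
  refine ⟨fun i => if (h.succAbove i : ℕ) < (h : ℕ) then r h - r (h.succAbove i)
      else if (h.succAbove i : ℕ) < p then r (h.succAbove i) - r h else r (h.succAbove i),
    fun i => ?_, ?_⟩
  · dsimp only
    split_ifs with h1 h2
    · exact ha1 _ h1
    · have hne : h.succAbove i ≠ h := Fin.succAbove_ne h i
      have : (h : ℕ) < (h.succAbove i : ℕ) := by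
        rcases lt_trichotomy ((h.succAbove i : ℕ)) (h : ℕ) with c | c | c
        · omega
        · exact absurd (Fin.ext c) hne
        · exact c
      exact ha2 _ this h2
    · exact hr _
  · rw [← key, Fin.sum_univ_succAbove g h, hgh, zero_add]
    refine Finset.sum_congr rfl fun i _ => ?_
    have hne : h.succAbove i ≠ h := Fin.succAbove_ne h i
    simp only [hg]
    split_ifs with h1 h2 <;> try rfl
    · have : (h.succAbove i : ℕ) < p := by omega
      simp only [this, if_true, smul_neg, neg_smul, ← sub_smul]
      module
    · omega
end

section
/- Let 1 ≤ p ≤ N, let β₁,…,β_N ∈ ℝ^d satisfy β₁+⋯+β_p = 0, let r₁,…,r_N ∈ [0,1] with r₁ ≤ r₂ ≤ ⋯ ≤ r_p, and set r = Σ_{k=1}^N r_kβ_k. Let s₁,…,s_N ∈ ℝ satisfy: s_k ≥ 0 whenever r_k = 0, s_k ≤ 0 whenever r_k = 1 (for all k ∈ {1,…,N}), and s_j ≤ s_{j+1} whenever 1 ≤ j < p and r_j = r_{j+1}; set ε = Σ_{k=1}^N s_kβ_k. Then there exists t₀ > 0 such that for all t with 0 < t < t₀ and all h ∈ {1,…,p},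 the point r + tε belongs to the zonotope Z(Ψ_h) of the system Ψ_h consisting of the N−1 vectors −β₁,…,−β_{h−1}, β_{h+1},…,β_p, β_{p+1},…,β_N. -/
open Finset

lemma exists_t0 {ι : Type*} [Fintype ι] [Nonempty ι] (a b : ι → ℝ)
    (ha : ∀ i, 0 ≤ a i) (hb : ∀ i, a i = 0 → 0 ≤ b i) :
    ∃ t₀ : ℝ, 0 < t₀ ∧ ∀ t : ℝ, 0 ≤ t → t < t₀ → ∀ i, 0 ≤ a i + t * b i := by
  set g : ι → ℝ := fun i => if b i < 0 then a i / (-b i) else 1 with hg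
  have hgpos : ∀ i, 0 < g i := by
    intro i
    simp only [hg]
    split_ifs with h
    · apply div_pos
      · rcases lt_or_eq_of_le (ha i) with h' | h'
        · exact h'
        · exact absurd (hb i h'.symm) (not_le.2 h)
      · linarith
    · norm_num
  refine ⟨Finset.univ.inf' Finset.univ_nonempty g, ?_, ?_⟩
  · exact (Finset.lt_inf'_iff _).2 fun i _ => hgpos i
  · intro t ht ht' i
    have hti : t < g i := lt_of_lt_of_le ht' (Finset.inf'_le _ (Finset.mem_univ i))
    by_cases h : b i < 0
    · have hbi : 0 < -b i := by linarith
      have : t * (-b i) < a i := by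
        rw [hg] at hti; simp only [if_pos h] at hti
        calc t * (-b i) < (a i / (-b i)) * (-b i) :=
              mul_lt_mul_of_pos_right hti hbi
          _ = a i := div_mul_cancel₀ _ (ne_of_gt hbi)
      nlinarith
    · push_neg at h
      nlinarith [mul_nonneg ht h, ha i]

lemma schain {n p : ℕ} (r s : Fin (n + 1) → ℝ)
    (hmono : ∀ j k : Fin (n + 1), (j : ℕ) ≤ (k : ℕ) → (k : ℕ) < p → r j ≤ r k)
    (hsmono : ∀ j k : Fin (n + 1), (k : ℕ) = (j : ℕ) + 1 → (k : ℕ) < p →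
      r j = r k → s j ≤ s k) :
    ∀ m : ℕ, ∀ j k : Fin (n + 1), (k : ℕ) = (j : ℕ) + m → (k : ℕ) < p →
      r j = r k → s j ≤ s k := by
  intro m
  induction m with
  | zero =>
    intro j k hjk _ _
    have : j = k := Fin.ext (by omega)
    rw [this]
  | succ m ih =>
    intro j k hjk hkp hr
    have hk' : (j : ℕ) + m < n + 1 := by omega
    set k' : Fin (n + 1) := ⟨(j : ℕ) + m, hk'⟩ with hk'def
    have h1 : r j ≤ r k' := hmono j k' (by simp [hk'def]) (by simp [hk'def]; omega)
    have h2 : r k' ≤ r k := hmono k' k (by simp [hk'def]; omega) hkp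
    have e1 : r j = r k' := le_antisymm h1 (by rw [hr]; exact h2)
    have e2 : r k' = r k := by rw [← e1, hr]
    have := ih j k' (by simp [hk'def]) (by simp [hk'def]; omega) e1
    have := hsmono k' k (by simp [hk'def]; omega) hkp e2
    linarith

/-- With `0`-based indices: if `β₀ + ⋯ + β_{p−1} = 0`, all `r_k ∈ [0,1]`,
`r₀ ≤ ⋯ ≤ r_{p−1}`, and `s` satisfies `s_k ≥ 0` when `r_k = 0`, `s_k ≤ 0` when `r_k = 1`,
and `s_j ≤ s_{j+1}` whenever `j+1 < p` and `r_j = r_{j+1}`, then with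
`r = Σ r_kβ_k` and `ε = Σ s_kβ_k` there is `t₀ > 0` such that for `0 < t < t₀` and every
`h < p`, the point `r + tε` lies in the zonotope `Z(Ψ_h)`, where `Ψ_h` is the system of
`n` vectors `−β₀,…,−β_{h−1}, β_{h+1},…,β_{p−1}, β_p,…,β_n` indexed via `h.succAbove`. -/
theorem statement2 {d n : ℕ} (p : ℕ) (hp1 : 1 ≤ p) (hpN : p ≤ n + 1)
    (β : Fin (n + 1) → EuclideanSpace ℝ (Fin d)) (r : Fin (n + 1) → ℝ)
    (hr : ∀ k, r k ∈ Set.Icc (0 : ℝ) 1)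
    (hmono : ∀ j k : Fin (n + 1), (j : ℕ) ≤ (k : ℕ) → (k : ℕ) < p → r j ≤ r k)
    (hsum : ∑ k ∈ univ.filter (fun k : Fin (n + 1) => (k : ℕ) < p), β k = 0)
    (s : Fin (n + 1) → ℝ)
    (hs0 : ∀ k, r k = 0 → 0 ≤ s k)
    (hs1 : ∀ k, r k = 1 → s k ≤ 0)
    (hsmono : ∀ j k : Fin (n + 1), (k : ℕ) = (j : ℕ) + 1 → (k : ℕ) < p →
      r j = r k → s j ≤ s k) :
    ∃ t₀ : ℝ, 0 < t₀ ∧ ∀ t : ℝ, 0 < t → t < t₀ →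
      ∀ h : Fin (n + 1), (h : ℕ) < p →
        (∑ k, r k • β k) + t • (∑ k, s k • β k) ∈
          Zonotope (fun i : Fin n =>
            if (h.succAbove i : ℕ) < (h : ℕ) then -β (h.succAbove i)
            else β (h.succAbove i)) := by
  classical
  have hchain : ∀ j k : Fin (n + 1), (j : ℕ) ≤ (k : ℕ) → (k : ℕ) < p →
      r j = r k → s j ≤ s k := fun j k hjk hkp hre =>
    schain r s hmono hsmono ((k : ℕ) - (j : ℕ)) j k (by omega) hkp hre
  set A : Fin (n + 1) → Fin (n + 1) → ℝ := fun h k =>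
    if (h : ℕ) < p then
      (if (k : ℕ) < (h : ℕ) then r h - r k else if (k : ℕ) < p then r k - r h else r k)
    else 1 with hAdef
  set B : Fin (n + 1) → Fin (n + 1) → ℝ := fun h k =>
    if (h : ℕ) < p then
      (if (k : ℕ) < (h : ℕ) then s h - s k else if (k : ℕ) < p then s k - s h else s k)
    else 0 with hBdef
  have hA0 : ∀ h k, 0 ≤ A h k := by
    intro h k
    simp only [hAdef]
    split_ifs with h1 h2 h3
    · have := hmono k h (le_of_lt h2) h1; linarith
    · have := hmono h k (le_of_not_gt h2) h3; linarith
    · exact (hr k).1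
    · norm_num
  have hA1 : ∀ h k, A h k ≤ 1 := by
    intro h k
    simp only [hAdef]
    split_ifs with h1 h2 h3
    · have := (hr h).2; have := (hr k).1; linarith
    · have := (hr k).2; have := (hr h).1; linarith
    · exact (hr k).2
    · norm_num
  have hB0 : ∀ h k, A h k = 0 → 0 ≤ B h k := by
    intro h k
    simp only [hAdef, hBdef]
    split_ifs with h1 h2 h3 <;> intro hA
    · have := hchain k h (le_of_lt h2) h1 (by linarith); linarith
    · have := hchain h k (le_of_not_gt h2) h3 (by linarith); linarith
    · have := hs0 k hA; linarith
    · norm_num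
  have hB1 : ∀ h k, A h k = 1 → B h k ≤ 0 := by
    intro h k
    simp only [hAdef, hBdef]
    split_ifs with h1 h2 h3 <;> intro hA
    · -- r h - r k = 1, so r h = 1, r k = 0
      have hrh : r h = 1 := le_antisymm (hr h).2 (by have := (hr k).1; linarith)
      have hrk : r k = 0 := by linarith
      have := hs1 h hrh; have := hs0 k hrk; linarith
    · have hrk : r k = 1 := le_antisymm (hr k).2 (by have := (hr h).1; linarith)
      have hrh : r h = 0 := by linarith
      have := hs1 k hrk; have := hs0 h hrh; linarith
    · have := hs1 k hA; linarith
    · norm_num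
  obtain ⟨t₀, ht₀, hT⟩ := exists_t0
    (ι := Fin (n + 1) × Fin (n + 1) × Bool)
    (fun x => if x.2.2 then A x.1 x.2.1 else 1 - A x.1 x.2.1)
    (fun x => if x.2.2 then B x.1 x.2.1 else -B x.1 x.2.1)
    (by
      rintro ⟨h, k, b⟩
      cases b
      · simp only [Bool.false_eq_true, if_false, sub_nonneg]
        exact hA1 h k
      · simp only [eq_self_iff_true, if_true]
        exact hA0 h k)
    (by
      rintro ⟨h, k, b⟩
      cases b
      · simp only [Bool.false_eq_true, if_false]
        intro hA
        have h1 : A h k = 1 := by linarith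
        have := hB1 h k h1; linarith
      · simp only [eq_self_iff_true, if_true]
        exact hB0 h k)
  refine ⟨t₀, ht₀, ?_⟩
  intro t ht ht' h hh
  have hlow : ∀ k, 0 ≤ A h k + t * B h k := fun k => by
    have := hT t (le_of_lt ht) ht' (h, k, true); simpa using this
  have hhigh : ∀ k, A h k + t * B h k ≤ 1 := fun k => by
    have := hT t (le_of_lt ht) ht' (h, k, false); simp at this; linarith
  refine ⟨fun i => A h (h.succAbove i) + t * B h (h.succAbove i),
    fun i => ⟨hlow _, hhigh _⟩, ?_⟩
  -- define the signed coefficients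
  set c : Fin (n + 1) → ℝ := fun k =>
    (r k + t * s k) - (if (k : ℕ) < p then r h + t * s h else 0) with hcdef
  have step1 : ∀ i : Fin n,
      (A h (h.succAbove i) + t * B h (h.succAbove i)) •
        (if (h.succAbove i : ℕ) < (h : ℕ) then -β (h.succAbove i)
          else β (h.succAbove i))
      = c (h.succAbove i) • β (h.succAbove i) := by
    intro i
    set k := h.succAbove i with hk
    simp only [hAdef, hBdef, hcdef, if_pos hh]
    by_cases h1 : (k : ℕ) < (h : ℕ)
    · have h2 : (k : ℕ) < p := lt_trans h1 hh
      simp only [if_pos h1, if_pos h2, smul_neg, ← neg_smul]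
      congr 1; ring
    · simp only [if_neg h1]
      by_cases h2 : (k : ℕ) < p
      · simp only [if_pos h2]; congr 1; ring
      · simp only [if_neg h2]; congr 1; ring
  rw [Finset.sum_congr rfl (fun i _ => step1 i)]
  have step2 : ∑ i : Fin n, c (h.succAbove i) • β (h.succAbove i)
      = ∑ k, c k • β k := by
    have := Fin.sum_univ_succAbove (fun k => c k • β k) h
    have hch : c h = 0 := by simp [hcdef, if_pos hh]
    rw [this, hch, zero_smul, zero_add]
  rw [step2]
  have step3 : ∑ k, c k • β k
      = (∑ k, r k • β k) + t • (∑ k, s k • β k) := by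
    have expand : ∀ k : Fin (n + 1), c k • β k
        = (r k • β k + t • (s k • β k))
          - (if (k : ℕ) < p then (r h + t * s h) • β k else 0) := by
      intro k
      simp only [hcdef]
      split_ifs with hkp
      · module
      · module
    rw [Finset.sum_congr rfl (fun k _ => expand k), Finset.sum_sub_distrib,
      Finset.sum_add_distrib, ← Finset.smul_sum, ← Finset.sum_filter,
      ← Finset.smul_sum, hsum, smul_zero, sub_zero]
  rw [step3]
end

section
/- Let p ≥ 1 and let z₁,…,z_p ∈ ℂ satisfy exp(z_j) ≠ 1 for every j. Then (exp(z₁+⋯+z_p) − 1) · ∏_{j=1}^p 1/(exp(z_j) − 1) = Σ_{h=1}^p (−1)^{h−1} · ∏_{1≤j<h} 1/(exp(−z_j) − 1) · ∏_{h<j≤p} 1/(exp(z_j) − 1), where empty products are interpreted as 1. -/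
open Finset

lemma key (E : ℂ) (h0 : E ≠ 0) (hE : E ≠ 1) : E * (E - 1)⁻¹ = -(E⁻¹ - 1)⁻¹ := by
  have h1 : E - 1 ≠ 0 := sub_ne_zero.mpr hE
  have h3 : (1:ℂ) - E ≠ 0 := sub_ne_zero.mpr (Ne.symm hE)
  rw [show E⁻¹ - 1 = (1 - E) * E⁻¹ by field_simp, mul_inv, inv_inv]
  field_simp; ring

lemma telescope (p : ℕ) (E : Fin p → ℂ) :
    (∏ j, E j) - 1 = ∑ h : Fin p, (∏ j ∈ Iio h, E j) * (E h - 1) := by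
  set F : ℕ → ℂ := fun i => if h : i < p then E ⟨i, h⟩ else 1 with hF
  have hg : ∀ h : Fin p, ∏ j ∈ Iio h, E j = ∏ i ∈ range h.val, F i := by
    intro h
    rw [← Nat.Iio_eq_range, ← Fin.map_valEmbedding_Iio, prod_map]
    apply prod_congr rfl
    intro i hi
    simp only [hF, Fin.valEmbedding_apply]
    rw [dif_pos i.isLt]
  have huniv : ∏ j, E j = ∏ i ∈ range p, F i := by
    rw [← Fin.prod_univ_eq_prod_range]
    apply prod_congr rfl
    intro i _
    simp [hF]
  rw [huniv]
  rw [show (∏ i ∈ range p, F i) - 1 =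
      ∑ i ∈ range p, ((∏ j ∈ range (i+1), F j) - ∏ j ∈ range i, F j) from by
    rw [Finset.sum_range_sub (fun k => ∏ j ∈ range k, F j)]; simp]
  rw [← Fin.sum_univ_eq_sum_range (fun i => (∏ j ∈ range (i+1), F j) - ∏ j ∈ range i, F j)]
  apply sum_congr rfl
  intro h _
  rw [hg, prod_range_succ]
  have : F h.val = E h := by simp [hF]
  rw [this]; ring

lemma prod_neg' {α : Type*} (s : Finset α) (f : α → ℂ) :
    ∏ x ∈ s, -f x = (-1 : ℂ) ^ s.card * ∏ x ∈ s, f x := by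
  rw [← Finset.prod_const, ← Finset.prod_mul_distrib]
  simp

lemma split3 (p : ℕ) (h : Fin p) (f : Fin p → ℂ) :
    ∏ j, f j = (∏ j ∈ Iio h, f j) * f h * ∏ j ∈ Ioi h, f j := by
  have hu : (Iio h) ∪ (Ici h) = (univ : Finset (Fin p)) := by
    ext j; simp [lt_or_ge]
  have hd : Disjoint (Iio h) (Ici h) := by
    simp [Finset.disjoint_left]
  rw [← hu, prod_union hd, Ici_eq_cons_Ioi, prod_cons]
  ring

theorem statement3 (p : ℕ) (hp : 1 ≤ p) (z : Fin p → ℂ)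
    (hz : ∀ j, Complex.exp (z j) ≠ 1) :
    (Complex.exp (∑ j, z j) - 1) * ∏ j, (Complex.exp (z j) - 1)⁻¹ =
      ∑ h : Fin p, (-1 : ℂ) ^ (h : ℕ) *
        (∏ j ∈ univ.filter (fun j : Fin p => j < h), (Complex.exp (-z j) - 1)⁻¹) *
        (∏ j ∈ univ.filter (fun j : Fin p => h < j), (Complex.exp (z j) - 1)⁻¹) := by
  have hfl : ∀ h : Fin p, univ.filter (fun j : Fin p => j < h) = Iio h := by
    intro h; ext j; simp
  have hfg : ∀ h : Fin p, univ.filter (fun j : Fin p => h < j) = Ioi h := by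
    intro h; ext j; simp
  set E : Fin p → ℂ := fun j => Complex.exp (z j) with hE
  rw [Complex.exp_sum]
  rw [telescope p E, sum_mul]
  apply sum_congr rfl
  intro h _
  rw [hfl, hfg]
  rw [split3 p h (fun j => (E j - 1)⁻¹)]
  have hE1 : ∀ j, E j - 1 ≠ 0 := fun j => sub_ne_zero.mpr (hz j)
  have hstep : (∏ j ∈ Iio h, E j) * (E h - 1) *
      ((∏ j ∈ Iio h, (E j - 1)⁻¹) * (E h - 1)⁻¹ * ∏ j ∈ Ioi h, (E j - 1)⁻¹) =
      (∏ j ∈ Iio h, E j * (E j - 1)⁻¹) * ∏ j ∈ Ioi h, (E j - 1)⁻¹ := by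
    rw [prod_mul_distrib]
    rw [show (∏ j ∈ Iio h, E j) * (E h - 1) *
      ((∏ j ∈ Iio h, (E j - 1)⁻¹) * (E h - 1)⁻¹ * ∏ j ∈ Ioi h, (E j - 1)⁻¹) =
      ((E h - 1) * (E h - 1)⁻¹) * ((∏ j ∈ Iio h, E j) * (∏ j ∈ Iio h, (E j - 1)⁻¹) *
        ∏ j ∈ Ioi h, (E j - 1)⁻¹) from by ring, mul_inv_cancel₀ (hE1 h), one_mul]
  rw [hstep]
  have hprod : ∏ j ∈ Iio h, E j * (E j - 1)⁻¹ =
      (-1 : ℂ) ^ (h : ℕ) * ∏ j ∈ Iio h, (Complex.exp (-z j) - 1)⁻¹ := by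
    have : ∀ j ∈ Iio h, E j * (E j - 1)⁻¹ = -(Complex.exp (-z j) - 1)⁻¹ := by
      intro j _
      rw [key (E j) (Complex.exp_ne_zero _) (hz j), hE]
      simp [← Complex.exp_neg]
    rw [prod_congr rfl this, prod_neg', Fin.card_Iio]
  rw [hprod, mul_assoc]
end

section
/- Let α₁,…,α_N ∈ ℝ^d and suppose there exists ξ ∈ ℝ^d with ⟨α_k,ξ⟩ > 0 for every k (i.e., the α_k generate a salient cone). Let y₁,…,y_N ∈ ℂ and let F : ℝ^d → ℂ be continuous with compact support. Then the function t ↦ exp(iΣ_k t_k y_k) F(Σ_k t_kα_k) is integrable on [0,∞)^N, only finitely many terms of the following sum are nonzero, and ∫_{[0,∞)^N} exp(iΣ_{k=1}^N t_k y_k) F(Σ_{k=1}^N t_kα_k) dt = Σ_{p∈ℕ^N} exp(iΣ_{k=1}^N p_k y_k) · ∫_{[0,1]^N} exp(iΣ_{k=1}^N t_k y_k) F(Σ_{k=1}^N (p_k + t_k)α_k) dt. -/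
open MeasureTheory

/-- If the `α_k` generate a salient cone (there is `ξ` with `⟨α_k,ξ⟩ > 0` for all `k`)
and `F` is continuous with compact support, then
`t ↦ exp(iΣ t_k y_k) F(Σ t_k α_k)` is integrable on `[0,∞)^N`, only finitely many of the
translated-box-spline terms are nonzero, and
`∫_{[0,∞)^N} exp(iΣ t_k y_k) F(Σ t_k α_k) dt =
  Σ_{p∈ℕ^N} exp(iΣ p_k y_k) ∫_{[0,1]^N} exp(iΣ t_k y_k) F(Σ (p_k+t_k) α_k) dt`. -/
theorem statement9 {d N : ℕ} (α : Fin N → EuclideanSpace ℝ (Fin d))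
    (ξ : EuclideanSpace ℝ (Fin d)) (hξ : ∀ k, 0 < (inner ℝ (α k) ξ : ℝ))
    (y : Fin N → ℂ) (F : EuclideanSpace ℝ (Fin d) → ℂ)
    (hF : Continuous F) (hFc : HasCompactSupport F) :
    IntegrableOn (fun t : Fin N → ℝ =>
        Complex.exp (Complex.I * ∑ k, (t k : ℂ) * y k) * F (∑ k, t k • α k))
      (Set.Ici (0 : Fin N → ℝ)) ∧
    {p : Fin N → ℕ | (Complex.exp (Complex.I * ∑ k, (p k : ℂ) * y k) *
        ∫ t in Set.Icc (0 : Fin N → ℝ) 1,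
          Complex.exp (Complex.I * ∑ k, (t k : ℂ) * y k) *
            F (∑ k, ((p k : ℝ) + t k) • α k)) ≠ 0}.Finite ∧
    (∫ t in Set.Ici (0 : Fin N → ℝ),
        Complex.exp (Complex.I * ∑ k, (t k : ℂ) * y k) * F (∑ k, t k • α k)) =
      ∑' p : Fin N → ℕ,
        Complex.exp (Complex.I * ∑ k, (p k : ℂ) * y k) *
          ∫ t in Set.Icc (0 : Fin N → ℝ) 1,
            Complex.exp (Complex.I * ∑ k, (t k : ℂ) * y k) *
              F (∑ k, ((p k : ℝ) + t k) • α k) := by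
  set g : (Fin N → ℝ) → ℂ := fun t =>
    Complex.exp (Complex.I * ∑ k, (t k : ℂ) * y k) * F (∑ k, t k • α k) with hgdef
  have hg : Continuous g := by
    apply Continuous.mul
    · exact Complex.continuous_exp.comp <| continuous_const.mul <|
        continuous_finset_sum _ fun k _ =>
          (Complex.continuous_ofReal.comp (continuous_apply k)).mul continuous_const
    · exact hF.comp <| continuous_finset_sum _ fun k _ =>
        (continuous_apply k).smul continuous_const
  -- bound on the support
  obtain ⟨M, hM0, hM⟩ : ∃ M : ℝ, 0 ≤ M ∧ ∀ x ∈ tsupport F, (inner ℝ x ξ : ℝ) ≤ M := by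
    have hcont : Continuous fun x : EuclideanSpace ℝ (Fin d) => (inner ℝ x ξ : ℝ) :=
      continuous_id.inner continuous_const
    obtain ⟨C, hC⟩ := (hFc.isCompact.image hcont).bddAbove
    refine ⟨max C 0, le_max_right _ _, fun x hx => le_trans ?_ (le_max_left _ _)⟩
    exact hC ⟨x, hx, rfl⟩
  have key : ∀ t : Fin N → ℝ, (∀ k, 0 ≤ t k) → F (∑ k, t k • α k) ≠ 0 →
      ∀ j, t j ≤ M / (inner ℝ (α j) ξ : ℝ) := by
    intro t ht hFt j
    have hmem : (∑ k, t k • α k) ∈ tsupport F :=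
      subset_tsupport F hFt
    have hsum : (inner ℝ (∑ k, t k • α k) ξ : ℝ) = ∑ k, t k * (inner ℝ (α k) ξ : ℝ) := by
      rw [sum_inner]
      exact Finset.sum_congr rfl fun k _ => real_inner_smul_left _ _ _
    have h1 : t j * (inner ℝ (α j) ξ : ℝ) ≤ ∑ k, t k * (inner ℝ (α k) ξ : ℝ) :=
      Finset.single_le_sum (fun k _ => mul_nonneg (ht k) (hξ k).le) (Finset.mem_univ j)
    have h2 : t j * (inner ℝ (α j) ξ : ℝ) ≤ M := h1.trans (hsum ▸ hM _ hmem)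
    exact (le_div_iff₀ (hξ j)).2 h2
  -- integrability
  set R : Fin N → ℝ := fun k => M / (inner ℝ (α k) ξ : ℝ) with hRdef
  have hvanish : ∀ x ∈ Set.Ici (0 : Fin N → ℝ) \ Set.Icc 0 R, g x = 0 := by
    intro x hx
    rcases hx with ⟨hx0, hxR⟩
    have hx0' : ∀ k, 0 ≤ x k := fun k => hx0 k
    by_contra hgx
    have hFx : F (∑ k, x k • α k) ≠ 0 := fun h => hgx (by simp [hgdef, h])
    exact hxR ⟨hx0, fun j => key x hx0' hFx j⟩
  have hInt : IntegrableOn g (Set.Ici (0 : Fin N → ℝ)) := by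
    have h1 : IntegrableOn g (Set.Ici (0 : Fin N → ℝ) ∩ Set.Icc 0 R) :=
      (hg.integrableOn_Icc).mono_set Set.inter_subset_right
    have h2 : IntegrableOn g (Set.Ici (0 : Fin N → ℝ) \ Set.Icc 0 R) := by
      rw [integrableOn_congr_fun hvanish (measurableSet_Ici.diff measurableSet_Icc)]
      exact integrableOn_zero
    have := h1.union h2
    rwa [Set.inter_union_diff] at this
  refine ⟨hInt, ?_, ?_⟩
  · -- finiteness
    apply Set.Finite.subset
      (Set.Finite.pi (fun k => Set.finite_Iic (⌊M / (inner ℝ (α k) ξ : ℝ)⌋₊)))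
    intro p hp
    have hint : (∫ t in Set.Icc (0 : Fin N → ℝ) 1,
        Complex.exp (Complex.I * ∑ k, (t k : ℂ) * y k) *
          F (∑ k, ((p k : ℝ) + t k) • α k)) ≠ 0 := by
      intro h
      exact hp (by rw [h, mul_zero])
    obtain ⟨t, ht, hFt⟩ : ∃ t ∈ Set.Icc (0 : Fin N → ℝ) 1,
        F (∑ k, ((p k : ℝ) + t k) • α k) ≠ 0 := by
      by_contra h
      push_neg at h
      exact hint (setIntegral_eq_zero_of_forall_eq_zero fun t htt => by
        rw [h t htt, mul_zero])
    have ht0 : ∀ k, 0 ≤ (p k : ℝ) + t k := fun k =>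
      add_nonneg (Nat.cast_nonneg _) (ht.1 k)
    have := key (fun k => (p k : ℝ) + t k) ht0 hFt
    intro k _
    have hk : (p k : ℝ) ≤ M / (inner ℝ (α k) ξ : ℝ) :=
      le_trans (le_add_of_nonneg_right (ht.1 k)) (this k)
    exact Nat.le_floor hk
  · -- main identity
    set B : (Fin N → ℕ) → Set (Fin N → ℝ) :=
      fun p => Set.pi Set.univ fun k => Set.Ico (p k : ℝ) (p k + 1) with hBdef
    have hBm : ∀ p, MeasurableSet (B p) := fun p =>
      MeasurableSet.univ_pi fun k => measurableSet_Ico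
    have hBdisj : Pairwise (Function.onFun Disjoint B) := by
      intro p q hpq
      rw [Function.onFun, Set.disjoint_left]
      intro x hxp hxq
      apply hpq
      funext k
      have h1 := hxp k (Set.mem_univ k)
      have h2 := hxq k (Set.mem_univ k)
      have hpk : (p k : ℝ) < q k + 1 := lt_of_le_of_lt h1.1 h2.2
      have hqk : (q k : ℝ) < p k + 1 := lt_of_le_of_lt h2.1 h1.2
      have : p k < q k + 1 := by exact_mod_cast hpk
      have : q k < p k + 1 := by exact_mod_cast hqk
      omega
    have hcover : Set.Ici (0 : Fin N → ℝ) = ⋃ p, B p := by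
      ext x
      simp only [Set.mem_Ici, Set.mem_iUnion, hBdef, Set.mem_pi, Set.mem_univ,
        forall_true_left, Set.mem_Ico, Pi.le_def, Pi.zero_apply]
      constructor
      · intro hx
        exact ⟨fun k => ⌊x k⌋₊, fun k => ⟨Nat.floor_le (hx k), Nat.lt_floor_add_one _⟩⟩
      · rintro ⟨p, hp⟩ k
        exact le_trans (Nat.cast_nonneg _) (hp k).1
    rw [hcover, integral_iUnion hBm hBdisj (hcover ▸ hInt)]
    refine tsum_congr fun p => ?_
    set pR : Fin N → ℝ := fun k => (p k : ℝ) with hpRdef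
    set I01 : Set (Fin N → ℝ) := Set.pi Set.univ fun _ => Set.Ico (0 : ℝ) 1 with hI01def
    have hI01m : MeasurableSet I01 := MeasurableSet.univ_pi fun k => measurableSet_Ico
    have hmem : ∀ x : Fin N → ℝ, x + pR ∈ B p ↔ x ∈ I01 := by
      intro x
      simp only [hBdef, hI01def, Set.mem_pi, Set.mem_univ, forall_true_left, Set.mem_Ico,
        Pi.add_apply, hpRdef]
      constructor
      · intro h k
        exact ⟨by linarith [(h k).1], by linarith [(h k).2]⟩
      · intro h k
        exact ⟨by linarith [(h k).1], by linarith [(h k).2]⟩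
    have hpt : ∀ x : Fin N → ℝ, g (x + pR) =
        Complex.exp (Complex.I * ∑ k, (p k : ℂ) * y k) *
          (Complex.exp (Complex.I * ∑ k, (x k : ℂ) * y k) *
            F (∑ k, ((p k : ℝ) + x k) • α k)) := by
      intro x
      simp only [hgdef, Pi.add_apply, hpRdef]
      have harg : (∑ k, (x k + (p k : ℝ)) • α k) = ∑ k, ((p k : ℝ) + x k) • α k := by
        refine Finset.sum_congr rfl fun k _ => by rw [add_comm]
      rw [harg]
      have hexp : Complex.I * ∑ k, ((x k + (p k : ℝ) : ℝ) : ℂ) * y k =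
          Complex.I * ∑ k, (p k : ℂ) * y k + Complex.I * ∑ k, (x k : ℂ) * y k := by
        push_cast
        rw [← mul_add, ← Finset.sum_add_distrib]
        congr 1
        refine Finset.sum_congr rfl fun k _ => by ring
      rw [hexp, Complex.exp_add, mul_assoc]
    calc ∫ x in B p, g x
        = ∫ x, (B p).indicator g x := (integral_indicator (hBm p)).symm
      _ = ∫ x, (B p).indicator g (x + pR) :=
          (integral_add_right_eq_self ((B p).indicator g) pR).symm
      _ = ∫ x, I01.indicator (fun t => g (t + pR)) x := by
          congr 1
          funext x
          classical
          rw [Set.indicator_apply, Set.indicator_apply, if_congr (hmem x) rfl rfl]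
      _ = ∫ x in I01, g (x + pR) := integral_indicator hI01m
      _ = ∫ x in Set.Icc (0 : Fin N → ℝ) 1, g (x + pR) := by
          refine setIntegral_congr_set ?_
          rw [MeasureTheory.volume_pi]
          exact MeasureTheory.Measure.univ_pi_Ico_ae_eq_Icc
      _ = ∫ x in Set.Icc (0 : Fin N → ℝ) 1,
            Complex.exp (Complex.I * ∑ k, (p k : ℂ) * y k) *
              (Complex.exp (Complex.I * ∑ k, (x k : ℂ) * y k) *
                F (∑ k, ((p k : ℝ) + x k) • α k)) := by
          simp_rw [hpt]
      _ = Complex.exp (Complex.I * ∑ k, (p k : ℂ) * y k) *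
            ∫ x in Set.Icc (0 : Fin N → ℝ) 1,
              Complex.exp (Complex.I * ∑ k, (x k : ℂ) * y k) *
                F (∑ k, ((p k : ℝ) + x k) • α k) := integral_const_mul _ _
end
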